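/- Let Γ be a finitely generated torsion-free nilpotent group with nontrivial center and let γ be a nontrivial element of the center of Γ. Then there exists a normal subgroup Λ of Γ such that the quotient Γ/Λ is a torsion-free nilpotent group whose center is infinite cyclic, and the image of γ in Γ/Λ is nontrivial. -/

import Mathlib

open scoped commutatorElement
open scoped IsMulCommutative

section Isolation

variable {G : Type} [Group G]

lemma TFN_comm_pow (a b : G) (hc : ⁅a, b⁆ ∈ Subgroup.center G) (k : ℕ) :
    ⁅a ^ k, b⁆ = ⁅a, b⁆ ^ k := by
  have key : ∀ k : ℕ, a ^ k * b = ⁅a, b⁆ ^ k * (b * a ^ k) := by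
    intro k
    induction k with
    | zero => simp
    | succ k ih =>
      have hzk : ⁅a, b⁆ ^ k ∈ Subgroup.center G := pow_mem hc k
      have hcomm : a * ⁅a, b⁆ ^ k = ⁅a, b⁆ ^ k * a :=
        Subgroup.mem_center_iff.mp hzk a
      have hab : a * b = ⁅a, b⁆ * (b * a) := by group
      calc a ^ (k + 1) * b = a * (a ^ k * b) := by rw [pow_succ']; group
        _ = a * (⁅a, b⁆ ^ k * (b * a ^ k)) := by rw [ih]
        _ = (a * ⁅a, b⁆ ^ k) * (b * a ^ k) := by group
        _ = (⁅a, b⁆ ^ k * a) * (b * a ^ k) := by rw [hcomm]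
        _ = ⁅a, b⁆ ^ k * ((a * b) * a ^ k) := by group
        _ = ⁅a, b⁆ ^ k * ((⁅a, b⁆ * (b * a)) * a ^ k) := by rw [hab]
        _ = ⁅a, b⁆ ^ (k + 1) * (b * a ^ (k + 1)) := by rw [pow_succ, pow_succ']; group
  have : ⁅a ^ k, b⁆ = (a ^ k * b) * (a ^ k)⁻¹ * b⁻¹ := by group
  rw [this, key k]
  group

lemma TFN_R (hTF : ∀ g : G, g ≠ 1 → ¬ IsOfFinOrder g) :
    ∀ i : ℕ, ∀ z : G, ∀ k : ℕ, 0 < k → z ∈ Subgroup.upperCentralSeries G (i + 1) →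
      z ^ k ∈ Subgroup.upperCentralSeries G i → z ∈ Subgroup.upperCentralSeries G i := by
  intro i
  induction i with
  | zero =>
    intro z k hk _ hzk
    rw [Subgroup.upperCentralSeries_zero, Subgroup.mem_bot] at hzk ⊢
    by_contra hz
    exact hTF z hz (isOfFinOrder_iff_pow_eq_one.mpr ⟨k, hk, hzk⟩)
  | succ i ih =>
    intro z k hk hz hzk
    rw [Subgroup.mem_upperCentralSeries_succ_iff]
    intro g
    have hw : ⁅z, g⁆ ∈ Subgroup.upperCentralSeries G (i + 1) := by
      have := Subgroup.mem_upperCentralSeries_succ_iff.mp hz g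
      simpa [commutatorElement_def] using this
    set N := Subgroup.upperCentralSeries G i with hN
    let π := QuotientGroup.mk' N
    have hπsurj := QuotientGroup.mk'_surjective N
    -- π ⁅z,g⁆ is central
    have hcen : π ⁅z, g⁆ ∈ Subgroup.center (G ⧸ N) := by
      rw [Subgroup.mem_center_iff]
      intro q
      obtain ⟨h, rfl⟩ := hπsurj q
      have hmem : ⁅⁅z, g⁆, h⁆ ∈ N :=
        by simpa [commutatorElement_def] using Subgroup.mem_upperCentralSeries_succ_iff.mp hw h
      have h1 : π ⁅⁅z, g⁆, h⁆ = 1 := by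
        rw [← MonoidHom.mem_ker, QuotientGroup.ker_mk']
        exact hmem
      have : ⁅π ⁅z, g⁆, π h⁆ = 1 := by
        rw [← map_commutatorElement]; exact h1
      exact (commutatorElement_eq_one_iff_mul_comm.mp this).symm
    have hπc : ⁅π z, π g⁆ ∈ Subgroup.center (G ⧸ N) := by
      rwa [← map_commutatorElement]
    -- (π ⁅z,g⁆)^k = 1
    have hzkmem : ⁅z ^ k, g⁆ ∈ N := by
      have := Subgroup.mem_upperCentralSeries_succ_iff.mp hzk g
      simpa [commutatorElement_def] using this
    have h2 : ⁅(π z) ^ k, π g⁆ = 1 := by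
      have h0 : π ⁅z ^ k, g⁆ = 1 := by
        rw [← MonoidHom.mem_ker, QuotientGroup.ker_mk']; exact hzkmem
      rw [map_commutatorElement, map_pow] at h0
      exact h0
    have h3 : (π ⁅z, g⁆) ^ k = 1 := by
      rw [map_commutatorElement, ← TFN_comm_pow (π z) (π g) hπc k]
      exact h2
    have h4 : ⁅z, g⁆ ^ k ∈ N := by
      rw [← QuotientGroup.ker_mk' N, MonoidHom.mem_ker]
      rw [map_pow]; exact h3
    have h5 : ⁅z, g⁆ ∈ N := ih ⁅z, g⁆ k hk hw h4
    simpa [commutatorElement_def] using h5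

lemma TFN_ucs_isolated [Group.IsNilpotent G] (hTF : ∀ g : G, g ≠ 1 → ¬ IsOfFinOrder g)
    (i : ℕ) (x : G) (k : ℕ) (hk : 0 < k) (h : x ^ k ∈ Subgroup.upperCentralSeries G i) :
    x ∈ Subgroup.upperCentralSeries G i := by
  obtain ⟨n, hn⟩ := Group.IsNilpotent.nilpotent (G := G)
  have aux : ∀ d : ℕ, x ∈ Subgroup.upperCentralSeries G (i + d) → x ∈ Subgroup.upperCentralSeries G i := by
    intro d
    induction d with
    | zero => intro hx; simpa using hx
    | succ d ihd =>
      intro hx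
      apply ihd
      exact TFN_R hTF (i + d) x k hk hx
        (Subgroup.upperCentralSeries_mono G (Nat.le_add_right i d) h)
  apply aux n
  have : Subgroup.upperCentralSeries G n ≤ Subgroup.upperCentralSeries G (i + n) :=
    Subgroup.upperCentralSeries_mono G (Nat.le_add_left n i)
  exact this (hn ▸ Subgroup.mem_top x)

lemma TFN_center_isolated [Group.IsNilpotent G] (hTF : ∀ g : G, g ≠ 1 → ¬ IsOfFinOrder g)
    (x : G) (k : ℕ) (hk : 0 < k) (h : x ^ k ∈ Subgroup.center G) :
    x ∈ Subgroup.center G := by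
  rw [← Subgroup.upperCentralSeries_one] at h ⊢
  exact TFN_ucs_isolated hTF 1 x k hk h

end Isolation


section FG

variable {G : Type} [Group G]

open Subgroup

lemma TFN_lcs_succ' (n : ℕ) :
    Subgroup.lowerCentralSeries (⊤ : Subgroup G) (n + 1) = ⁅Subgroup.lowerCentralSeries (⊤ : Subgroup G) n, (⊤ : Subgroup G)⁆ := rfl

lemma TFN_fg_sup {H K : Subgroup G} (hH : H.FG) (hK : K.FG) : (H ⊔ K).FG := by
  obtain ⟨S, hS, hSfin⟩ := (Subgroup.fg_iff H).mp hH
  obtain ⟨T, hT, hTfin⟩ := (Subgroup.fg_iff K).mp hK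
  exact (Subgroup.fg_iff _).mpr ⟨S ∪ T, by rw [Subgroup.closure_union, hS, hT], hSfin.union hTfin⟩

lemma TFN_fg_closure {S : Set G} (h : S.Finite) : (Subgroup.closure S).FG :=
  (Subgroup.fg_iff _).mpr ⟨S, rfl, h⟩

lemma TFN_fg_bot : (⊥ : Subgroup G).FG :=
  (Subgroup.fg_iff _).mpr ⟨∅, by simp, Set.finite_empty⟩

lemma TFN_fg_map {G' : Type} [Group G'] {H : Subgroup G} (f : G →* G') (h : H.FG) :
    (H.map f).FG := by
  obtain ⟨S, hS, hSfin⟩ := (Subgroup.fg_iff H).mp h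
  refine (Subgroup.fg_iff _).mpr ⟨f '' S, ?_, hSfin.image f⟩
  rw [← MonoidHom.map_closure, hS]

/-- key step: each lower central factor is generated mod the next by finitely many elements -/
lemma TFN_lcs_step (S : Set G) (hfin : S.Finite) (hS : Subgroup.closure S = ⊤) (i : ℕ) :
    ∃ T : Set G, T.Finite ∧
      Subgroup.lowerCentralSeries (⊤ : Subgroup G) i = Subgroup.closure T ⊔ Subgroup.lowerCentralSeries (⊤ : Subgroup G) (i + 1) := by
  induction i with
  | zero =>
    refine ⟨S, hfin, ?_⟩
    rw [Subgroup.lowerCentralSeries_zero, hS, top_sup_eq]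
  | succ i ih =>
    obtain ⟨T, hTfin, hT⟩ := ih
    refine ⟨(fun p : G × G => ⁅p.1, p.2⁆) '' (T ×ˢ S), (hTfin.prod hfin).image _, ?_⟩
    set T' : Set G := (fun p : G × G => ⁅p.1, p.2⁆) '' (T ×ˢ S) with hT'def
    set K : Subgroup G := Subgroup.closure T' ⊔ Subgroup.lowerCentralSeries (⊤ : Subgroup G) (i + 2) with hKdef
    have hTsub : T ⊆ (Subgroup.lowerCentralSeries (⊤ : Subgroup G) i : Set G) := by
      intro t ht
      have : t ∈ Subgroup.closure T := Subgroup.subset_closure ht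
      rw [hT]
      exact Subgroup.mem_sup_left this
    have hKle : K ≤ Subgroup.lowerCentralSeries (⊤ : Subgroup G) (i + 1) := by
      apply sup_le
      · rw [Subgroup.closure_le]
        rintro x ⟨⟨t, s⟩, ⟨ht, _⟩, rfl⟩
        rw [TFN_lcs_succ']
        exact Subgroup.commutator_mem_commutator (hTsub ht) (Subgroup.mem_top s)
      · exact Subgroup.lowerCentralSeries_antitone ⊤ (Nat.le_succ (i + 1))
    have hlcsK : Subgroup.lowerCentralSeries (⊤ : Subgroup G) (i + 2) ≤ K := le_sup_right
    have hKnormal : K.Normal := by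
      constructor
      intro k hk g
      have hk1 : k ∈ Subgroup.lowerCentralSeries (⊤ : Subgroup G) (i + 1) := hKle hk
      have hcomm : ⁅g, k⁆ ∈ K := by
        apply hlcsK
        have : ⁅k, g⁆ ∈ Subgroup.lowerCentralSeries (⊤ : Subgroup G) (i + 2) := by
          rw [TFN_lcs_succ']
          exact Subgroup.commutator_mem_commutator hk1 (Subgroup.mem_top g)
        have h2 : ⁅g, k⁆ = ⁅k, g⁆⁻¹ := by rw [commutatorElement_inv]
        rw [h2]
        exact inv_mem this
      have : g * k * g⁻¹ = ⁅g, k⁆ * k := by group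
      rw [this]
      exact mul_mem hcomm hk
    -- the two auxiliary subgroups
    have main : Subgroup.lowerCentralSeries (⊤ : Subgroup G) (i + 1) ≤ K := by
      rw [TFN_lcs_succ', Subgroup.commutator_le]
      -- C : elements u with ∀ v, ⁅u,v⁆ ∈ K
      let C : Subgroup G :=
      { carrier := {u : G | ∀ v : G, ⁅u, v⁆ ∈ K}
        one_mem' := by
          intro v
          have : ⁅(1 : G), v⁆ = 1 := by group
          rw [this]; exact one_mem K
        mul_mem' := by
          intro x y hx hy v
          have : ⁅x * y, v⁆ = x * ⁅y, v⁆ * x⁻¹ * ⁅x, v⁆ := by group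
          rw [this]
          exact mul_mem (hKnormal.conj_mem _ (hy v) x) (hx v)
        inv_mem' := by
          intro x hx v
          have : ⁅x⁻¹, v⁆ = x⁻¹ * ⁅x, v⁆⁻¹ * (x⁻¹)⁻¹ := by group
          rw [this]
          exact hKnormal.conj_mem _ (inv_mem (hx v)) x⁻¹ }
      have hC : Subgroup.lowerCentralSeries (⊤ : Subgroup G) i ≤ C := by
        rw [hT]
        apply sup_le
        · rw [Subgroup.closure_le]
          intro t ht
          -- show t ∈ C
          show ∀ v : G, ⁅t, v⁆ ∈ K
          let D : Subgroup G :=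
          { carrier := {v : G | ⁅t, v⁆ ∈ K}
            one_mem' := by
              have : ⁅t, (1 : G)⁆ = 1 := by group
              show ⁅t, (1:G)⁆ ∈ K
              rw [this]; exact one_mem K
            mul_mem' := by
              intro v w hv hw
              show ⁅t, v * w⁆ ∈ K
              have : ⁅t, v * w⁆ = ⁅t, v⁆ * (v * ⁅t, w⁆ * v⁻¹) := by group
              rw [this]
              exact mul_mem hv (hKnormal.conj_mem _ hw v)
            inv_mem' := by
              intro v hv
              show ⁅t, v⁻¹⁆ ∈ K
              have : ⁅t, v⁻¹⁆ = v⁻¹ * ⁅t, v⁆⁻¹ * (v⁻¹)⁻¹ := by group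
              rw [this]
              exact hKnormal.conj_mem _ (inv_mem hv) v⁻¹ }
          have hD : (⊤ : Subgroup G) ≤ D := by
            rw [← hS, Subgroup.closure_le]
            intro s hs
            show ⁅t, s⁆ ∈ K
            apply Subgroup.mem_sup_left
            exact Subgroup.subset_closure ⟨(t, s), ⟨ht, hs⟩, rfl⟩
          intro v
          exact hD (Subgroup.mem_top v)
        · intro u hu
          show ∀ v : G, ⁅u, v⁆ ∈ K
          intro v
          apply hlcsK
          rw [TFN_lcs_succ']
          exact Subgroup.commutator_mem_commutator hu (Subgroup.mem_top v)
      intro u hu v _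
      exact hC hu v
    exact le_antisymm main hKle

lemma TFN_lcs_fg [hFG : Group.FG G] :
    ∀ d i : ℕ, Subgroup.lowerCentralSeries (⊤ : Subgroup G) (i + d) = ⊥ → (Subgroup.lowerCentralSeries (⊤ : Subgroup G) i).FG := by
  obtain ⟨S, hScl, hSfin⟩ := Group.fg_iff.mp hFG
  intro d
  induction d with
  | zero => intro i h; rw [Nat.add_zero] at h; rw [h]; exact TFN_fg_bot
  | succ d ih =>
    intro i h
    obtain ⟨T, hTfin, hT⟩ := TFN_lcs_step S hSfin hScl i
    rw [hT]
    apply TFN_fg_sup (TFN_fg_closure hTfin)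
    exact ih (i + 1) (by rw [← h]; ring_nf)

lemma TFN_comm_noetherian {A : Type} [CommGroup A] [Group.FG A] (B : Subgroup A) : B.FG := by
  haveI : Module.Finite ℤ (Additive A) :=
    Module.Finite.iff_addGroup_fg.mpr (AddGroup.fg_of_group_fg)
  haveI : IsNoetherian ℤ (Additive A) := isNoetherian_of_isNoetherianRing_of_finite ℤ (Additive A)
  rw [Subgroup.fg_iff_add_fg]
  set B' : AddSubgroup (Additive A) := Subgroup.toAddSubgroup B with hB'
  have hfg : (AddSubgroup.toIntSubmodule B').FG := IsNoetherian.noetherian _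
  rw [Submodule.fg_iff_addSubgroup_fg] at hfg
  exact hfg

lemma TFN_fg_of_ker {Q : Type} [Group Q] (π : G →* Q) (H : Subgroup G)
    (h1 : (H ⊓ π.ker).FG) (h2 : (H.map π).FG) : H.FG := by
  classical
  obtain ⟨S1, hS1, hS1fin⟩ := (Subgroup.fg_iff _).mp h1
  obtain ⟨S2, hS2, hS2fin⟩ := (Subgroup.fg_iff _).mp h2
  have hS2sub : S2 ⊆ (H.map π : Set Q) := by rw [← hS2]; exact Subgroup.subset_closure
  have hlift : ∀ b : S2, ∃ g : G, g ∈ H ∧ π g = b := by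
    rintro ⟨b, hb⟩
    have hb' : b ∈ H.map π := hS2sub hb
    obtain ⟨g, hg, hgb⟩ := Subgroup.mem_map.mp hb'
    exact ⟨g, hg, hgb⟩
  choose f hfH hfπ using hlift
  haveI : Finite S2 := hS2fin.to_subtype
  have hrangefin : (Set.range f).Finite := Set.finite_range f
  refine (Subgroup.fg_iff _).mpr ⟨Set.range f ∪ S1, ?_, hrangefin.union hS1fin⟩
  have hS1H : S1 ⊆ (H : Set G) := by
    intro x hx
    have : x ∈ H ⊓ π.ker := by rw [← hS1]; exact Subgroup.subset_closure hx
    exact this.1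
  apply le_antisymm
  · rw [Subgroup.closure_le]
    rintro x (⟨b, rfl⟩ | hx)
    · exact hfH b
    · exact hS1H hx
  · intro h hh
    have hmap : π h ∈ Subgroup.closure S2 := by rw [hS2]; exact ⟨h, hh, rfl⟩
    have hsub : Subgroup.closure S2 ≤ (Subgroup.closure (Set.range f)).map π := by
      rw [MonoidHom.map_closure]
      apply Subgroup.closure_mono
      rintro b hb
      have : π (f ⟨b, hb⟩) ∈ ⇑π '' Set.range f :=
        Set.mem_image_of_mem π (Set.mem_range_self _)
      rwa [hfπ ⟨b, hb⟩] at this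
    obtain ⟨a, ha, hab⟩ := hsub hmap
    have haH : a ∈ H := by
      have : Subgroup.closure (Set.range f) ≤ H := by
        rw [Subgroup.closure_le]; rintro x ⟨b, rfl⟩; exact hfH b
      exact this ha
    have hker : h * a⁻¹ ∈ H ⊓ π.ker := by
      refine Subgroup.mem_inf.mpr ⟨mul_mem hh (inv_mem haH), ?_⟩
      rw [MonoidHom.mem_ker, map_mul, map_inv, hab]
      group
    have h1' : h * a⁻¹ ∈ Subgroup.closure (Set.range f ∪ S1) := by
      rw [Subgroup.closure_union]
      apply Subgroup.mem_sup_right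
      rw [hS1]
      exact hker
    have h2' : a ∈ Subgroup.closure (Set.range f ∪ S1) := by
      rw [Subgroup.closure_union]
      exact Subgroup.mem_sup_left ha
    have := mul_mem h1' h2'
    simpa using this

lemma TFN_lcs_quotient_le {Q : Type} [Group Q] (π : G →* Q) (hsurj : Function.Surjective π)
    (n : ℕ) : Subgroup.lowerCentralSeries (⊤ : Subgroup Q) n ≤ Subgroup.map π (Subgroup.lowerCentralSeries (⊤ : Subgroup G) n) := by
  induction n with
  | zero =>
    intro q _
    obtain ⟨g, rfl⟩ := hsurj q
    exact ⟨g, Subgroup.mem_top g, rfl⟩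
  | succ n ih =>
    have e1 : Subgroup.lowerCentralSeries (⊤ : Subgroup Q) (n + 1) = ⁅Subgroup.lowerCentralSeries (⊤ : Subgroup Q) n, (⊤ : Subgroup Q)⁆ := rfl
    rw [e1, Subgroup.commutator_le]
    intro p hp q _
    obtain ⟨p', hp', rfl⟩ := Subgroup.mem_map.mp (ih hp)
    obtain ⟨g, rfl⟩ := hsurj q
    refine Subgroup.mem_map.mpr ⟨⁅p', g⁆, ?_, by rw [map_commutatorElement]⟩
    show ⁅p', g⁆ ∈ ⁅Subgroup.lowerCentralSeries (⊤ : Subgroup G) n, (⊤ : Subgroup G)⁆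
    exact Subgroup.commutator_mem_commutator hp' (Subgroup.mem_top g)

lemma TFN_noetherian :
    ∀ (n : ℕ) (G : Type) [Group G], Group.FG G → Subgroup.lowerCentralSeries (⊤ : Subgroup G) n = ⊥ →
      ∀ H : Subgroup G, H.FG := by
  intro n
  induction n with
  | zero =>
    intro G _ _ h H
    have : H = ⊥ := by
      rw [← le_bot_iff, ← h, Subgroup.lowerCentralSeries_zero]
      exact le_top
    rw [this]; exact TFN_fg_bot
  | succ n ih =>
    intro G _ hFG h H
    set L : Subgroup G := Subgroup.lowerCentralSeries (⊤ : Subgroup G) n with hL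
    have hLc : L ≤ Subgroup.center G := by
      intro x hx
      rw [Subgroup.mem_center_iff]
      intro g
      have : ⁅x, g⁆ ∈ Subgroup.lowerCentralSeries (⊤ : Subgroup G) (n + 1) := by
        rw [TFN_lcs_succ']
        exact Subgroup.commutator_mem_commutator hx (Subgroup.mem_top g)
      rw [h, Subgroup.mem_bot] at this
      exact (commutatorElement_eq_one_iff_mul_comm.mp this).symm
    haveI := hFG
    have hLfg : L.FG := TFN_lcs_fg 1 n (by rw [← h])
    -- L is commutative
    haveI hLcomm : IsMulCommutative L := by
      constructor
      constructor
      intro a b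
      apply Subtype.ext
      have := Subgroup.mem_center_iff.mp (hLc a.2) b
      exact this.symm
    haveI : Group.FG ↥L := (Group.fg_iff_subgroup_fg L).mpr hLfg
    -- part 1 : (H ⊓ L).FG
    have part1 : (H ⊓ L).FG := by
      have hB := TFN_comm_noetherian (H.subgroupOf L)
      have := TFN_fg_map L.subtype hB
      rwa [Subgroup.subgroupOf_map_subtype] at this
    -- part 2 : quotient
    haveI : L.Normal := inferInstance
    set π := QuotientGroup.mk' L with hπ
    have hsurj := QuotientGroup.mk'_surjective L
    haveI : Group.FG (G ⧸ L) := Group.fg_of_surjective hsurj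
    have hQlcs : Subgroup.lowerCentralSeries (⊤ : Subgroup (G ⧸ L)) n = ⊥ := by
      rw [← le_bot_iff]
      calc Subgroup.lowerCentralSeries (⊤ : Subgroup (G ⧸ L)) n ≤ Subgroup.map π (Subgroup.lowerCentralSeries (⊤ : Subgroup G) n) :=
            TFN_lcs_quotient_le π hsurj n
        _ ≤ ⊥ := by
            have : Subgroup.map π (Subgroup.lowerCentralSeries (⊤ : Subgroup G) n) = ⊥ := by
              rw [Subgroup.map_eq_bot_iff, QuotientGroup.ker_mk']
            exact le_of_eq this
    have part2 : (H.map π).FG := ih (G ⧸ L) inferInstance hQlcs (H.map π)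
    apply TFN_fg_of_ker π H _ part2
    rwa [QuotientGroup.ker_mk']

end FG


section Abelian

lemma TFN_abelian_case (A : Type) [CommGroup A] [Group.FG A]
    (tf : ∀ (x : A) (n : ℕ), 0 < n → x ^ n = 1 → x = 1)
    (a : A) (ha : a ≠ 1)
    (hmax : ∀ M : Subgroup A, M ≠ ⊥ → a ∉ M →
      (∀ (x : A) (n : ℕ), 0 < n → x ^ n ∈ M → x ∈ M) → False) :
    Nonempty (A ≃* Multiplicative ℤ) := by
  classical
  haveI : Module.Finite ℤ (Additive A) := Module.Finite.iff_addGroup_fg.mpr AddGroup.fg_of_group_fg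
  haveI : NoZeroSMulDivisors ℤ (Additive A) := by
    constructor
    intro c x hcx
    by_contra hcon
    push_neg at hcon
    obtain ⟨hc, hx⟩ := hcon
    have hz : Additive.toMul x ^ c = 1 := by
      have := congrArg Additive.toMul hcx
      simpa [toMul_zsmul] using this
    have h1 : Additive.toMul x ^ c.natAbs = 1 := by
      rcases Int.natAbs_eq c with h | h
      · rw [h] at hz; simpa [zpow_natCast] using hz
      · rw [h] at hz; simpa [zpow_neg, zpow_natCast, inv_eq_one] using hz
    have h2 := tf (Additive.toMul x) c.natAbs (Int.natAbs_pos.mpr hc) h1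
    exact hx (by simpa using h2)
  haveI : Module.Free ℤ (Additive A) := Module.free_of_finite_type_torsion_free'
  set b0 := Module.Free.chooseBasis ℤ (Additive A) with hb0
  set ι := Module.Free.ChooseBasisIndex ℤ (Additive A) with hι
  set a' : Additive A := Additive.ofMul a with ha'
  have ha'ne : a' ≠ 0 := by
    intro h
    exact ha (by simpa [ha'] using congrArg Additive.toMul h)
  obtain hn0 | hn1 | hn2 : Fintype.card ι = 0 ∨ Fintype.card ι = 1 ∨ 2 ≤ Fintype.card ι := by
    omega
  · -- empty basis : A is trivial, contradiction
    haveI : IsEmpty ι := Fintype.card_eq_zero_iff.mp hn0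
    exfalso
    apply ha'ne
    have : b0.repr a' = 0 := by
      ext i
      exact (IsEmpty.false i).elim
    have := congrArg b0.repr.symm this
    simpa using this
  · -- rank one : A ≃ ℤ
    let e : ι ≃ Fin 1 := Fintype.equivFinOfCardEq hn1
    let b1 := b0.reindex e
    let e2 : Additive A ≃ₗ[ℤ] ℤ := b1.equivFun.trans (LinearEquiv.funUnique (Fin 1) ℤ ℤ)
    exact ⟨AddEquiv.toMultiplicativeRight e2.toAddEquiv⟩
  · -- rank at least two : contradiction with maximality
    exfalso
    have hra : b0.repr a' ≠ 0 := by
      intro h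
      apply ha'ne
      have := congrArg b0.repr.symm h
      simpa using this
    obtain ⟨i, hi⟩ : ∃ i, b0.repr a' i ≠ 0 := by
      by_contra hcon
      push_neg at hcon
      exact hra (Finsupp.ext hcon)
    obtain ⟨j, hj⟩ : ∃ j : ι, j ≠ i := Fintype.exists_ne_of_one_lt_card (by omega) i
    set f : Additive A →ₗ[ℤ] ℤ := b0.coord i with hf
    let M : Subgroup A :=
    { carrier := {x : A | f (Additive.ofMul x) = 0}
      one_mem' := by
        show f (Additive.ofMul (1 : A)) = 0
        simp
      mul_mem' := by
        intro x y hx hy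
        show f (Additive.ofMul (x * y)) = 0
        have : Additive.ofMul (x * y) = Additive.ofMul x + Additive.ofMul y := rfl
        rw [this, map_add]
        simp only [Set.mem_setOf_eq] at hx hy
        rw [hx, hy, add_zero]
      inv_mem' := by
        intro x hx
        show f (Additive.ofMul x⁻¹) = 0
        have : Additive.ofMul x⁻¹ = -Additive.ofMul x := rfl
        rw [this, map_neg]
        simp only [Set.mem_setOf_eq] at hx
        rw [hx, neg_zero] }
    apply hmax M
    · -- M ≠ ⊥
      intro hM
      have hmem : Additive.toMul (b0 j) ∈ M := by
        show f (Additive.ofMul (Additive.toMul (b0 j))) = 0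
        have : Additive.ofMul (Additive.toMul (b0 j)) = b0 j := rfl
        rw [this, hf, Module.Basis.coord_apply, Module.Basis.repr_self]
        exact Finsupp.single_eq_of_ne' hj
      rw [hM, Subgroup.mem_bot] at hmem
      have : b0 j = 0 := by simpa using congrArg Additive.ofMul hmem
      exact b0.ne_zero j this
    · -- a ∉ M
      intro hmem
      have : f a' = 0 := hmem
      rw [hf, Module.Basis.coord_apply] at this
      exact hi this
    · -- isolated
      intro x n hn hxn
      have h1 : f (Additive.ofMul (x ^ n)) = 0 := hxn
      have h2 : Additive.ofMul (x ^ n) = (n : ℤ) • Additive.ofMul x := by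
        simp [ofMul_pow]
      rw [h2, map_smul, smul_eq_mul] at h1
      have : f (Additive.ofMul x) = 0 := by
        rcases mul_eq_zero.mp h1 with h | h
        · exact absurd (by exact_mod_cast h) (by omega : n ≠ 0)
        · exact h
      exact this

end Abelian


/-- A finitely generated torsion-free nilpotent group with nontrivial center admits,
for each nontrivial central element `γ`, a normal subgroup `Λ` such that `Γ/Λ` is a
torsion-free nilpotent group with infinite cyclic center in which the image of `γ`
is nontrivial. -/
theorem stmt0 (Γ : Type) [Group Γ] [Group.FG Γ] [Group.IsNilpotent Γ]
    (hTF : ∀ g : Γ, g ≠ 1 → ¬ IsOfFinOrder g)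
    (hcenter : Subgroup.center Γ ≠ ⊥)
    (γ : Γ) (hγ : γ ∈ Subgroup.center Γ) (hγne : γ ≠ 1) :
    ∃ (Λ : Subgroup Γ) (hΛ : Λ.Normal),
      letI := hΛ
      Group.IsNilpotent (Γ ⧸ Λ) ∧
      (∀ g : Γ ⧸ Λ, g ≠ 1 → ¬ IsOfFinOrder g) ∧
      Nonempty (Subgroup.center (Γ ⧸ Λ) ≃* Multiplicative ℤ) ∧
      QuotientGroup.mk' Λ γ ≠ 1 := by
  classical
  set S : Set (Subgroup Γ) :=
    {Λ | Λ.Normal ∧ (∀ (x : Γ) (n : ℕ), 0 < n → x ^ n ∈ Λ → x ∈ Λ) ∧ γ ∉ Λ} with hSdef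
  have hbot : (⊥ : Subgroup Γ) ∈ S := by
    refine ⟨inferInstance, ?_, by simpa [Subgroup.mem_bot] using hγne⟩
    intro x n hn hx
    rw [Subgroup.mem_bot] at hx ⊢
    by_contra h
    exact hTF x h (isOfFinOrder_iff_pow_eq_one.mpr ⟨n, hn, hx⟩)
  have hchains : ∀ c ⊆ S, IsChain (· ≤ ·) c → ∀ y ∈ c, ∃ ub ∈ S, ∀ z ∈ c, z ≤ ub := by
    intro c hcS hchain y hy
    refine ⟨sSup c, ?_, fun z hz => le_sSup hz⟩
    have hmem : ∀ x : Γ, x ∈ sSup c ↔ ∃ H ∈ c, x ∈ H := fun x =>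
      Subgroup.mem_sSup_of_directedOn ⟨y, hy⟩ hchain.directedOn
    refine ⟨?_, ?_, ?_⟩
    · constructor
      intro m hm g
      obtain ⟨H, hHc, hmH⟩ := (hmem m).mp hm
      exact (hmem _).mpr ⟨H, hHc, (hcS hHc).1.conj_mem m hmH g⟩
    · intro x n hn hx
      obtain ⟨H, hHc, hxH⟩ := (hmem _).mp hx
      exact (hmem x).mpr ⟨H, hHc, (hcS hHc).2.1 x n hn hxH⟩
    · intro hγmem
      obtain ⟨H, hHc, hγH⟩ := (hmem γ).mp hγmem
      exact (hcS hHc).2.2 hγH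
  obtain ⟨Λ, -, hΛS, hΛmax⟩ := zorn_le_nonempty₀ S hchains ⊥ hbot
  -- the maximal element
  obtain ⟨hΛnormal, hΛiso, hΛγ⟩ := hΛS
  haveI := hΛnormal
  set Q := Γ ⧸ Λ with hQdef
  set π := QuotientGroup.mk' Λ with hπdef
  have hπsurj : Function.Surjective π := QuotientGroup.mk'_surjective Λ
  haveI hQfg : Group.FG Q := Group.fg_of_surjective hπsurj
  haveI hQnilp : Group.IsNilpotent Q := inferInstance
  have hkerπ : ∀ x : Γ, π x = 1 ↔ x ∈ Λ := fun x => QuotientGroup.eq_one_iff x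
  -- Q is torsion-free
  have hQTF : ∀ g : Q, g ≠ 1 → ¬ IsOfFinOrder g := by
    intro g hg hfin
    obtain ⟨n, hn, hgn⟩ := isOfFinOrder_iff_pow_eq_one.mp hfin
    obtain ⟨x, rfl⟩ := hπsurj g
    have hxn : x ^ n ∈ Λ := by
      rw [← hkerπ]
      simpa [map_pow] using hgn
    exact hg ((hkerπ x).mpr (hΛiso x n hn hxn))
  -- image of γ
  have hγQ : π γ ∈ Subgroup.center Q := by
    rw [Subgroup.mem_center_iff]
    intro q
    obtain ⟨x, rfl⟩ := hπsurj q
    rw [← map_mul, ← map_mul, Subgroup.mem_center_iff.mp hγ x]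
  have hγQne : π γ ≠ 1 := fun h => hΛγ ((hkerπ γ).mp h)
  -- the center of Q is finitely generated
  obtain ⟨n, hn⟩ := Subgroup.nilpotent_iff_lowerCentralSeries.mp hQnilp
  have hcfg : (Subgroup.center Q).FG := TFN_noetherian n Q hQfg hn (Subgroup.center Q)
  haveI : Group.FG ↥(Subgroup.center Q) := (Group.fg_iff_subgroup_fg _).mpr hcfg
  -- apply the abelian case
  have key : Nonempty (↥(Subgroup.center Q) ≃* Multiplicative ℤ) := by
    apply TFN_abelian_case ↥(Subgroup.center Q) ?_ ⟨π γ, hγQ⟩ ?_ ?_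
    · -- torsion-free
      intro x n hn hxn
      have : (x : Q) ^ n = 1 := by
        have := congrArg (Subgroup.subtype _) hxn
        simpa using this
      have hx1 : (x : Q) = 1 := by
        by_contra h
        exact hQTF x h (isOfFinOrder_iff_pow_eq_one.mpr ⟨n, hn, this⟩)
      exact Subtype.ext hx1
    · -- nontrivial
      intro h
      exact hγQne (by simpa using congrArg (Subgroup.subtype _) h)
    · -- maximality
      intro M hMbot haM hMiso
      set MQ : Subgroup Q := M.map (Subgroup.center Q).subtype with hMQ
      have hMQcen : MQ ≤ Subgroup.center Q := by
        rintro q ⟨y, hy, rfl⟩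
        exact y.2
      have hMQnormal : MQ.Normal := by
        constructor
        intro m hm g
        have hc : g * m = m * g := Subgroup.mem_center_iff.mp (hMQcen hm) g
        have : g * m * g⁻¹ = m := by rw [hc]; group
        rwa [this]
      set Λ' : Subgroup Γ := MQ.comap π with hΛ'
      have hΛ'S : Λ' ∈ S := by
        refine ⟨Subgroup.Normal.comap hMQnormal π, ?_, ?_⟩
        · intro x n hn hxn
          have h1 : (π x) ^ n ∈ MQ := by
            have : π (x ^ n) ∈ MQ := hxn
            rwa [map_pow] at this
          have h2 : (π x) ^ n ∈ Subgroup.center Q := hMQcen h1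
          have h3 : π x ∈ Subgroup.center Q := TFN_center_isolated hQTF (π x) n hn h2
          have h4 : (⟨π x, h3⟩ : ↥(Subgroup.center Q)) ^ n ∈ M := by
            obtain ⟨y, hy, hyeq⟩ := h1
            have hyc : (y : Q) = π x ^ n := hyeq
            have : y = (⟨π x, h3⟩ : ↥(Subgroup.center Q)) ^ n := by
              apply Subtype.ext
              rw [hyc]
              simp
            rwa [this] at hy
          have h5 := hMiso _ n hn h4
          exact Subgroup.mem_map_of_mem _ h5
        · intro hγmem
          obtain ⟨y, hy, hyeq⟩ := hγmem
          have : y = (⟨π γ, hγQ⟩ : ↥(Subgroup.center Q)) := Subtype.ext hyeq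
          rw [this] at hy
          exact haM hy
      have hle : Λ ≤ Λ' := by
        intro x hx
        have : π x = 1 := (hkerπ x).mpr hx
        show π x ∈ MQ
        rw [this]
        exact one_mem MQ
      have hne : Λ' ≠ Λ := by
        obtain ⟨y, hyM, hyne⟩ : ∃ y : ↥(Subgroup.center Q), y ∈ M ∧ y ≠ 1 := by
          by_contra hcon
          push_neg at hcon
          apply hMbot
          apply le_antisymm _ bot_le
          intro y hy
          rw [Subgroup.mem_bot]
          by_contra h
          exact h (hcon y hy)
        obtain ⟨x, hxeq⟩ := hπsurj (y : Q)
        intro heq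
        have hxΛ' : x ∈ Λ' := by
          show π x ∈ MQ
          rw [hxeq]
          exact Subgroup.mem_map_of_mem _ hyM
        rw [heq] at hxΛ'
        have : π x = 1 := (hkerπ x).mpr hxΛ'
        rw [hxeq] at this
        apply hyne
        apply Subtype.ext
        simpa using this
      exact hne (le_antisymm (hΛmax hΛ'S hle) hle)
  refine ⟨Λ, hΛnormal, hQnilp, hQTF, key, hγQne⟩
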